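/- Suppose {X_α, φ_{βα}} and {Y_α, ψ_{βα}} are inverse systems of uniform spaces over the same directed index set and f_α : X_α → Y_α are compatible maps, each having strong approximate uniqueness of chain lifts. Then the induced map f = lim f_α : lim X_α → lim Y_α has strong approximate uniqueness of chain lifts. -/

import Mathlib

open Filter Set

universe u v

section Chains

variable {X : Type u} {Y : Type v}

/-- `c` is an `E`-chain: consecutive members of the list lie in `E`. -/
def IsEChain (E : Set (X × X)) (c : List X) : Prop :=
  c.Chain' (fun a b => (a, b) ∈ E)

/-- Two chains (necessarily of the same length) are `E`-close. -/
def EClose (E : Set (X × X)) (c d : List X) : Prop :=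
  List.Forall₂ (fun a b => (a, b) ∈ E) c d

variable [UniformSpace X] [UniformSpace Y]

/-- `f` generates the uniform structure on `Y`: it is uniformly continuous,
surjective, and images of entourages are entourages. -/
def GeneratesUS (f : X → Y) : Prop :=
  UniformContinuous f ∧ Function.Surjective f ∧
    ∀ E ∈ uniformity X, Prod.map f f '' E ∈ uniformity Y

/-- `f` has chain lifting. -/
def ChainLifting (f : X → Y) : Prop :=
  ∀ E ∈ uniformity X, ∃ F ∈ uniformity X, ∀ x : X, ∀ c : List Y,
    IsEChain (Prod.map f f '' F) c → c.head? = some (f x) →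
      ∃ d : List X, IsEChain E d ∧ d.head? = some x ∧ d.map f = c

/-- `f` has uniqueness of chain lifts. -/
def UniqueChainLifts (f : X → Y) : Prop :=
  ∀ E ∈ uniformity X, ∃ F ∈ uniformity X, F ⊆ E ∧ ∀ c d : List X,
    IsEChain F c → IsEChain F d → c.head? = d.head? → c.map f = d.map f → c = d

/-- `f` has approximate uniqueness of chain lifts. -/
def ApproxUniqueChainLifts (f : X → Y) : Prop :=
  ∀ E ∈ uniformity X, ∃ F ∈ uniformity X, F ⊆ E ∧ ∀ c d : List X,
    IsEChain F c → IsEChain F d → c.head? = d.head? → c.map f = d.map f → EClose E c d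

/-- `f` has strong approximate uniqueness of chain lifts. -/
def StrongApproxUniqueChainLifts (f : X → Y) : Prop :=
  ∀ E ∈ uniformity X, ∃ F ∈ uniformity X, F ⊆ E ∧ ∀ c d : List X,
    IsEChain F c → IsEChain F d → c.head? = d.head? → c.map f = d.map f → EClose F c d

/-- `f` is a uniform covering map. -/
def IsUCM (f : X → Y) : Prop :=
  GeneratesUS f ∧ ChainLifting f ∧ UniqueChainLifts f

/-- `h` has `F`-bounded fibers. -/
def BoundedFibers {Z : Type*} (F : Set (X × X)) (h : X → Z) : Prop :=
  ∀ a b : X, h a = h b → (a, b) ∈ F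

/-- `f` has complete fibers (each fiber, with the subspace uniformity, is complete). -/
def CompleteFibers (f : X → Y) : Prop :=
  ∀ y : Y, IsComplete (f ⁻¹' {y})

/-- `f` is approximated by uniform covering maps. -/
def ApproxByUCMs (f : X → Y) : Prop :=
  ∀ E ∈ uniformity X, ∃ F ∈ uniformity X, F ⊆ E ∧
    ∃ (Z : Type (max u v)) (_ : UniformSpace Z) (h : X → Z) (g : Z → Y),
      (∀ x, g (h x) = f x) ∧ IsUCM g ∧ BoundedFibers F h

end Chains

/-- An inverse system of uniform spaces over a preordered index set, with
uniformly continuous bonding maps `bond i j h : Xs j → Xs i` for `i ≤ j`. -/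
structure InvSys (ι : Type*) [Preorder ι] (Xs : ι → Type*)
    [∀ i, UniformSpace (Xs i)] where
  bond : ∀ i j, i ≤ j → Xs j → Xs i
  uc : ∀ i j (h : i ≤ j), UniformContinuous (bond i j h)
  bond_self : ∀ i (x : Xs i), bond i i le_rfl x = x
  bond_comp : ∀ i j k (hij : i ≤ j) (hjk : j ≤ k) (x : Xs k),
    bond i j hij (bond j k hjk x) = bond i k (hij.trans hjk) x

/-- The inverse limit (the set of threads), carrying the inverse limit uniformity:
the subspace uniformity of the product uniformity, whose basic entourages are
preimages of entourages under the projections (since the index set is directed). -/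
abbrev InvLim {ι : Type*} [Preorder ι] {Xs : ι → Type*} [∀ i, UniformSpace (Xs i)]
    (S : InvSys ι Xs) : Type _ :=
  { x : ∀ i, Xs i // ∀ i j (h : i ≤ j), S.bond i j h (x j) = x i }

/-- The strong Mittag-Leffler property of an inverse system. -/
def StrongML {ι : Type*} [Preorder ι] {Xs : ι → Type*} [∀ i, UniformSpace (Xs i)]
    (S : InvSys ι Xs) : Prop :=
  ∀ i : ι, ∃ j : ι, ∃ h : i ≤ j,
    Set.range (S.bond i j h) = Set.range (fun x : InvLim S => x.1 i)

/-- Strong approximate uniqueness of chain lifts is preserved by inverse limits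
of compatible maps between inverse systems of uniform spaces. -/
theorem invLim_strongApproxUniqueChainLifts
    {ι : Type*} [Preorder ι] [IsDirected ι (· ≤ ·)] [Nonempty ι]
    {Xs : ι → Type*} [∀ i, UniformSpace (Xs i)]
    {Ys : ι → Type*} [∀ i, UniformSpace (Ys i)]
    (S : InvSys ι Xs) (T : InvSys ι Ys)
    (fι : ∀ i, Xs i → Ys i)
    (hcompat : ∀ i j (h : i ≤ j) (x : Xs j),
      T.bond i j h (fι j x) = fι i (S.bond i j h x))
    (hsau : ∀ i, StrongApproxUniqueChainLifts (fι i))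
    (f : InvLim S → InvLim T)
    (hf : ∀ (x : InvLim S) (i : ι), (f x).1 i = fι i (x.1 i)) :
    StrongApproxUniqueChainLifts f := by
  have h1 : uniformity (InvLim S) = ⨅ i, Filter.comap
      (fun p : InvLim S × InvLim S => (p.1.1 i, p.2.1 i)) (uniformity (Xs i)) := by
    rw [uniformity_subtype, Pi.uniformity, Filter.comap_iInf]
    congr 1; ext i; rw [Filter.comap_comap]; rfl
  have hmono : ∀ i k (hik : i ≤ k),
      Filter.comap (fun p : InvLim S × InvLim S => (p.1.1 k, p.2.1 k)) (uniformity (Xs k)) ≤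
      Filter.comap (fun p : InvLim S × InvLim S => (p.1.1 i, p.2.1 i)) (uniformity (Xs i)) := by
    intro i k hik
    have heq : (fun p : InvLim S × InvLim S => (p.1.1 i, p.2.1 i)) =
        (Prod.map (S.bond i k hik) (S.bond i k hik)) ∘
          (fun p : InvLim S × InvLim S => (p.1.1 k, p.2.1 k)) := by
      funext p
      simp [Prod.map, p.1.2 i k hik, p.2.2 i k hik]
    rw [heq, ← Filter.comap_comap]
    refine Filter.comap_mono ?_
    exact Filter.tendsto_iff_comap.mp (S.uc i k hik)
  -- key: basic entourages
  intro E hE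
  rw [h1] at hE
  have hdir : Directed (· ≥ ·) (fun i => Filter.comap
      (fun p : InvLim S × InvLim S => (p.1.1 i, p.2.1 i)) (uniformity (Xs i))) := by
    intro i j
    obtain ⟨k, hik, hjk⟩ := directed_of (· ≤ ·) i j
    exact ⟨k, hmono i k hik, hmono j k hjk⟩
  obtain ⟨i, hi⟩ := (Filter.mem_iInf_of_directed hdir E).mp hE
  obtain ⟨Ei, hEi, hsub⟩ := Filter.mem_comap.mp hi
  obtain ⟨Fi, hFi, hFiE, hFiprop⟩ := hsau i Ei hEi
  set π : InvLim S → Xs i := fun x => x.1 i with hπ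
  refine ⟨{p : InvLim S × InvLim S | (π p.1, π p.2) ∈ Fi}, ?_, ?_, ?_⟩
  · rw [h1]
    exact Filter.le_def.mp (iInf_le _ i) _ (Filter.preimage_mem_comap hFi)
  · intro p hp
    exact hsub (hFiE hp)
  · intro c d hc hd hhead hmap
    have hc' : IsEChain Fi (c.map π) := by
      unfold IsEChain at hc ⊢
      refine (List.isChain_map _).mpr ?_
      exact hc
    have hd' : IsEChain Fi (d.map π) := by
      unfold IsEChain at hd ⊢
      refine (List.isChain_map _).mpr ?_
      exact hd
    have hhead' : (c.map π).head? = (d.map π).head? := by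
      rw [List.head?_map, List.head?_map, hhead]
    have hmap' : (c.map π).map (fι i) = (d.map π).map (fι i) := by
      rw [List.map_map, List.map_map]
      have : (fι i ∘ π) = (fun x : InvLim S => (f x).1 i) := by
        funext x; simp [hπ, hf x i]
      rw [this]
      have := congrArg (List.map (fun y : InvLim T => y.1 i)) hmap
      simpa [List.map_map, Function.comp_def] using this
    have hclose := hFiprop (c.map π) (d.map π) hc' hd' hhead' hmap'
    unfold EClose at hclose ⊢
    rw [List.forall₂_map_left_iff, List.forall₂_map_right_iff] at hclose
    exact hclose.imp (fun a b h => h)
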